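/- Let V be a finite set, P ∈ ℝ^{V×V} a row-stochastic matrix, τ ∈ ℕ, and p ≥ 1 a real number. For S ⊆ V let P_S be the matrix with (P_S)_{ij} = P_{ij} for i ∉ S and (P_S)_{ij} = δ_{ij} for i ∈ S, and define g_{ij}(S) = (P_S^τ)_{ij} and h_i(S) = Σ_{j∈V\S} (P_S^τ)_{ij}. Then the convergence error bound f̂(S) = Σ_{i∈V\S} [ Σ_{j∈V\S} g_{ij}(S)^p + h_i(S)^p ] is a supermodular function of S: for all S ⊆ T ⊆ V and v ∈ V \ T, f̂(S) - f̂(S ∪ {v}) ≥ f̂(T) - f̂(T ∪ {v}). -/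

import Mathlib

open Matrix

/-- The modification of a transition matrix `P` in which every state in `S` is made
absorbing: rows indexed by `S` are replaced by the corresponding rows of the identity. -/
def absorb {V : Type*} [DecidableEq V] (P : Matrix V V ℝ) (S : Finset V) :
    Matrix V V ℝ :=
  Matrix.of fun i j => if i ∈ S then (if i = j then 1 else 0) else P i j

section Aux

open Finset

/- Auxiliary convexity lemmas -/

lemma aux_rpow_shift_mono {p c : ℝ} (hp : 1 ≤ p) (hc : 0 ≤ c) {x y : ℝ}
    (hx : 0 ≤ x) (hxy : x ≤ y) :
    (x + c) ^ p - x ^ p ≤ (y + c) ^ p - y ^ p := by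
  have hder : ∀ t : ℝ, HasDerivAt (fun t : ℝ => (t + c) ^ p - t ^ p)
      (p * (t + c) ^ (p - 1) - p * t ^ (p - 1)) t := by
    intro t
    have h1 : HasDerivAt (fun t : ℝ => t + c) 1 t := (hasDerivAt_id t).add_const c
    have h2 : HasDerivAt (fun s : ℝ => s ^ p) (p * (t + c) ^ (p - 1)) (t + c) :=
      Real.hasDerivAt_rpow_const (Or.inr hp)
    have h3 := h2.comp t h1
    have h4 : HasDerivAt (fun s : ℝ => s ^ p) (p * t ^ (p - 1)) t :=
      Real.hasDerivAt_rpow_const (Or.inr hp)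
    have h5 := h3.sub h4
    simp only [mul_one] at h5
    exact h5
  have hmono : MonotoneOn (fun t : ℝ => (t + c) ^ p - t ^ p) (Set.Ici 0) := by
    apply monotoneOn_of_deriv_nonneg (convex_Ici 0)
    · exact fun t _ => (hder t).continuousAt.continuousWithinAt
    · exact fun t _ => (hder t).differentiableAt.differentiableWithinAt
    · intro t ht
      rw [interior_Ici] at ht
      rw [(hder t).deriv]
      have : t ^ (p - 1) ≤ (t + c) ^ (p - 1) :=
        Real.rpow_le_rpow (le_of_lt ht) (by linarith) (by linarith)
      nlinarith [this]
  exact hmono hx (le_trans hx hxy) hxy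

lemma aux_rpow_diff_mono {p : ℝ} (hp : 1 ≤ p) {x x' c c' : ℝ}
    (hx'0 : 0 ≤ x') (hx : x' ≤ x) (hc'0 : 0 ≤ c') (hc : c' ≤ c) :
    (x' + c') ^ p - x' ^ p ≤ (x + c) ^ p - x ^ p := by
  have h1 : (x' + c') ^ p ≤ (x' + c) ^ p :=
    Real.rpow_le_rpow (by linarith) (by linarith) (by linarith)
  have h2 := aux_rpow_shift_mono hp (le_trans hc'0 hc) hx'0 hx
  linarith

/- Auxiliary entrywise matrix lemmas -/

variable {V : Type*} [Fintype V] [DecidableEq V]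

lemma aux_entry_mul_mono {A A' B B' : Matrix V V ℝ}
    (hA0 : ∀ i j, 0 ≤ A' i j) (hA : ∀ i j, A' i j ≤ A i j)
    (hB0 : ∀ i j, 0 ≤ B' i j) (hB : ∀ i j, B' i j ≤ B i j) :
    ∀ i j, (A' * B') i j ≤ (A * B) i j := by
  intro i j
  simp only [Matrix.mul_apply]
  exact Finset.sum_le_sum fun k _ =>
    mul_le_mul (hA i k) (hB k j) (hB0 k j) (le_trans (hA0 i k) (hA i k))

lemma aux_entry_pow_nonneg {A : Matrix V V ℝ} (hA : ∀ i j, 0 ≤ A i j) :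
    ∀ (n : ℕ) i j, 0 ≤ (A ^ n) i j := by
  intro n
  induction n with
  | zero => intro i j; simp [Matrix.one_apply]; split <;> norm_num
  | succ n ih =>
    intro i j
    rw [pow_succ, Matrix.mul_apply]
    exact Finset.sum_nonneg fun k _ => mul_nonneg (ih i k) (hA k j)

lemma aux_entry_pow_mono {A A' : Matrix V V ℝ}
    (hA0 : ∀ i j, 0 ≤ A' i j) (hA : ∀ i j, A' i j ≤ A i j) :
    ∀ (n : ℕ) i j, (A' ^ n) i j ≤ (A ^ n) i j := by
  intro n
  induction n with
  | zero => intro i j; simp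
  | succ n ih =>
    intro i j
    rw [pow_succ, pow_succ]
    exact aux_entry_mul_mono (aux_entry_pow_nonneg hA0 n) ih hA0 hA i j

lemma aux_entry_pow_diff_mono {A A' R R' : Matrix V V ℝ}
    (hA'0 : ∀ i j, 0 ≤ A' i j) (hA : ∀ i j, A' i j ≤ A i j)
    (hR'0 : ∀ i j, 0 ≤ R' i j) (hR : ∀ i j, R' i j ≤ R i j) :
    ∀ (n : ℕ) i j,
      ((A' + R') ^ n) i j - (A' ^ n) i j ≤ ((A + R) ^ n) i j - (A ^ n) i j := by
  have hS'0 : ∀ i j, 0 ≤ (A' + R') i j := fun i j => by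
    simp only [Matrix.add_apply]; exact add_nonneg (hA'0 i j) (hR'0 i j)
  have hS : ∀ i j, (A' + R') i j ≤ (A + R) i j := fun i j => by
    simp only [Matrix.add_apply]; exact add_le_add (hA i j) (hR i j)
  intro n
  induction n with
  | zero => intro i j; simp
  | succ n ih =>
    have key : ∀ (X Y : Matrix V V ℝ),
        (X + Y) ^ (n + 1) - X ^ (n + 1)
          = (X + Y) * ((X + Y) ^ n - X ^ n) + Y * X ^ n := by
      intro X Y
      rw [pow_succ', pow_succ']
      noncomm_ring
    intro i j
    have hAle : ∀ i j, A' i j ≤ (A' + R') i j := fun i j => by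
      simp only [Matrix.add_apply]; linarith [hR'0 i j]
    have hD'0 : ∀ i j, 0 ≤ ((A' + R') ^ n - A' ^ n) i j := fun i j => by
      simp only [Matrix.sub_apply]
      linarith [aux_entry_pow_mono hA'0 hAle n i j]
    have hD'D : ∀ i j, ((A' + R') ^ n - A' ^ n) i j ≤ ((A + R) ^ n - A ^ n) i j :=
      fun i j => by simp only [Matrix.sub_apply]; linarith [ih i j]
    have h1 := aux_entry_mul_mono hS'0 hS hD'0 hD'D i j
    have h2 := aux_entry_mul_mono hR'0 hR (aux_entry_pow_nonneg hA'0 n)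
      (aux_entry_pow_mono hA'0 hA n) i j
    have e1 : ((A + R) ^ (n + 1)) i j - (A ^ (n + 1)) i j
        = ((A + R) * ((A + R) ^ n - A ^ n)) i j + (R * A ^ n) i j := by
      rw [← Matrix.sub_apply, key A R, Matrix.add_apply]
    have e2 : ((A' + R') ^ (n + 1)) i j - (A' ^ (n + 1)) i j
        = ((A' + R') * ((A' + R') ^ n - A' ^ n)) i j + (R' * A' ^ n) i j := by
      rw [← Matrix.sub_apply, key A' R', Matrix.add_apply]
    linarith

/- The substochastic restriction matrix -/

def qmat (P : Matrix V V ℝ) (S : Finset V) : Matrix V V ℝ :=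
  Matrix.of fun i j => if i ∈ S ∨ j ∈ S then 0 else P i j

lemma qmat_nonneg {P : Matrix V V ℝ} (hP : ∀ i j, 0 ≤ P i j) (S : Finset V) :
    ∀ i j, 0 ≤ qmat P S i j := by
  intro i j; simp only [qmat, Matrix.of_apply]; split <;> [rfl; exact hP i j]

lemma qmat_mono {P : Matrix V V ℝ} (hP : ∀ i j, 0 ≤ P i j) {S T : Finset V}
    (hST : S ⊆ T) : ∀ i j, qmat P T i j ≤ qmat P S i j := by
  intro i j
  simp only [qmat, Matrix.of_apply]
  by_cases h : i ∈ T ∨ j ∈ T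
  · simp only [h, if_true]
    split <;> [rfl; exact hP i j]
  · have h' : ¬ (i ∈ S ∨ j ∈ S) := fun hc => h (hc.imp (@hST i) (@hST j))
    simp [h, h']

lemma qmat_insert_diff_mono {P : Matrix V V ℝ} (hP : ∀ i j, 0 ≤ P i j)
    {S T : Finset V} (hST : S ⊆ T) (v : V) :
    ∀ i j, qmat P T i j - qmat P (insert v T) i j
        ≤ qmat P S i j - qmat P (insert v S) i j := by
  intro i j
  by_cases hT : i ∈ T ∨ j ∈ T
  · have h1 : (i ∈ insert v T ∨ j ∈ insert v T) := by
      rcases hT with h | h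
      · exact Or.inl (Finset.mem_insert_of_mem h)
      · exact Or.inr (Finset.mem_insert_of_mem h)
    have e1 : qmat P T i j = 0 := by
      simp only [qmat, Matrix.of_apply, if_pos hT]
    have e2 : qmat P (insert v T) i j = 0 := by
      simp only [qmat, Matrix.of_apply, if_pos h1]
    have h2 : 0 ≤ qmat P S i j - qmat P (insert v S) i j := by
      have := qmat_mono hP (Finset.subset_insert v S) i j
      linarith
    rw [e1, e2]; linarith
  · have hS : ¬ (i ∈ S ∨ j ∈ S) := fun hc => hT (hc.imp (@hST i) (@hST j))
    have hT' : (i : V) ∉ T := fun h => hT (Or.inl h)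
    have hT'' : (j : V) ∉ T := fun h => hT (Or.inr h)
    have hS' : (i : V) ∉ S := fun h => hS (Or.inl h)
    have hS'' : (j : V) ∉ S := fun h => hS (Or.inr h)
    simp only [qmat, Matrix.of_apply, Finset.mem_insert]
    by_cases hv : i = v ∨ j = v <;>
      simp [hT', hT'', hS', hS'', hv]

lemma absorb_pow_mem {P : Matrix V V ℝ} {S : Finset V} {i : V} (hi : i ∈ S) :
    ∀ (n : ℕ) (j : V), ((absorb P S) ^ n) i j = if i = j then 1 else 0 := by
  intro n
  induction n with
  | zero => intro j; simp [Matrix.one_apply]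
  | succ n ih =>
    intro j
    rw [pow_succ', Matrix.mul_apply]
    have : ∀ k, absorb P S i k * ((absorb P S) ^ n) k j
        = if i = k then ((absorb P S) ^ n) k j else 0 := by
      intro k
      simp only [absorb, Matrix.of_apply, hi, if_true]
      split <;> simp
    simp only [this]
    rw [Finset.sum_ite_eq (Finset.univ) i (fun k => ((absorb P S) ^ n) k j)]
    simp [ih]

lemma absorb_pow_eq_qmat {P : Matrix V V ℝ} {S : Finset V} {j : V} (hj : j ∉ S) :
    ∀ (n : ℕ) (i : V), i ∉ S → ((absorb P S) ^ n) i j = ((qmat P S) ^ n) i j := by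
  intro n
  induction n with
  | zero => intro i _; simp
  | succ n ih =>
    intro i hi
    rw [pow_succ', pow_succ', Matrix.mul_apply, Matrix.mul_apply]
    apply Finset.sum_congr rfl
    intro k _
    by_cases hk : k ∈ S
    · have h1 : absorb P S i k = P i k := by simp [absorb, hi]
      have h2 : ((absorb P S) ^ n) k j = 0 := by
        rw [absorb_pow_mem hk]
        have : k ≠ j := fun h => hj (h ▸ hk)
        simp [this]
      have h3 : qmat P S i k = 0 := by simp [qmat, hk]
      simp [h1, h2, h3]
    · have h1 : absorb P S i k = P i k := by simp [absorb, hi]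
      have h3 : qmat P S i k = P i k := by simp [qmat, hk, hi]
      rw [h1, h3, ih k hk]

lemma sum_compl_split {U : Finset V} {v : V} (hv : v ∉ U) (f : V → ℝ) :
    ∑ i ∈ Uᶜ, f i = f v + ∑ i ∈ (insert v U)ᶜ, f i := by
  rw [Finset.compl_insert]
  exact (Finset.add_sum_erase _ f (Finset.mem_compl.mpr hv)).symm

end Aux

/-- The convergence error bound
`f̂(S) = ∑_{i∉S} [ ∑_{j∉S} g_{ij}(S)^p + h_i(S)^p ]`, where `g_{ij}(S) = (P_S^τ)_{ij}`
and `h_i(S) = ∑_{j∉S} (P_S^τ)_{ij}`, is a supermodular function of the input set `S`. -/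
theorem convergence_error_bound_supermodular {V : Type*} [Fintype V] [DecidableEq V]
    (P : Matrix V V ℝ)
    (hnonneg : ∀ i j, 0 ≤ P i j)
    (hrowsum : ∀ i, ∑ j, P i j = 1)
    (τ : ℕ) (p : ℝ) (hp : 1 ≤ p)
    (fhat : Finset V → ℝ)
    (hfhat : ∀ S : Finset V, fhat S =
      ∑ i ∈ Sᶜ, ((∑ j ∈ Sᶜ, (((absorb P S) ^ τ) i j) ^ p) +
        (∑ j ∈ Sᶜ, ((absorb P S) ^ τ) i j) ^ p)) :
    ∀ S T : Finset V, S ⊆ T → ∀ v ∉ T,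
      fhat S - fhat (insert v S) ≥ fhat T - fhat (insert v T) := by
  intro S T hST v hvT
  have hvS : v ∉ S := fun h => hvT (hST h)
  have hp0 : (0 : ℝ) ≤ p := by linarith
  -- the restricted-walk matrices
  set g : Finset V → Matrix V V ℝ := fun U => (qmat P U) ^ τ with hg
  have g0 : ∀ U i j, (0:ℝ) ≤ g U i j := fun U =>
    aux_entry_pow_nonneg (qmat_nonneg hnonneg U) τ
  have gmono : ∀ {U W : Finset V}, U ⊆ W → ∀ i j, g W i j ≤ g U i j :=
    fun {U W} h => aux_entry_pow_mono (qmat_nonneg hnonneg W) (qmat_mono hnonneg h) τ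
  have gdiff : ∀ i j, g T i j - g (insert v T) i j
      ≤ g S i j - g (insert v S) i j := by
    intro i j
    have h := aux_entry_pow_diff_mono (A := qmat P (insert v S))
      (A' := qmat P (insert v T))
      (R := qmat P S - qmat P (insert v S))
      (R' := qmat P T - qmat P (insert v T))
      (qmat_nonneg hnonneg _)
      (qmat_mono hnonneg (Finset.insert_subset_insert v hST))
      (fun i j => by
        simp only [Matrix.sub_apply]
        linarith [qmat_mono hnonneg (Finset.subset_insert v T) i j])
      (fun i j => by
        simp only [Matrix.sub_apply]
        linarith [qmat_insert_diff_mono hnonneg hST v i j])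
      τ i j
    have eS : qmat P (insert v S) + (qmat P S - qmat P (insert v S)) = qmat P S := by
      abel
    have eT : qmat P (insert v T) + (qmat P T - qmat P (insert v T)) = qmat P T := by
      abel
    rw [eS, eT] at h
    exact h
  -- the per-node summand
  set F : Finset V → V → ℝ := fun U i =>
    (∑ j ∈ Uᶜ, (g U i j) ^ p) + (∑ j ∈ Uᶜ, g U i j) ^ p with hF
  have hfq : ∀ U : Finset V, fhat U = ∑ i ∈ Uᶜ, F U i := by
    intro U
    rw [hfhat U]
    apply Finset.sum_congr rfl
    intro i hi
    have hiU : i ∉ U := Finset.mem_compl.mp hi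
    have hrow : ∀ j ∈ Uᶜ, ((absorb P U) ^ τ) i j = g U i j := fun j hj =>
      absorb_pow_eq_qmat (Finset.mem_compl.mp hj) τ i hiU
    simp only [hF]
    congr 1
    · exact Finset.sum_congr rfl fun j hj => by rw [hrow j hj]
    · congr 1
      exact Finset.sum_congr rfl fun j hj => hrow j hj
  -- decomposition of the marginal difference
  have hdecomp : ∀ (U : Finset V), v ∉ U →
      fhat U - fhat (insert v U)
        = F U v + ∑ i ∈ (insert v U)ᶜ, (F U i - F (insert v U) i) := by
    intro U hv
    rw [hfq U, hfq (insert v U), sum_compl_split hv (F U),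
      Finset.sum_sub_distrib]
    ring
  rw [ge_iff_le, hdecomp S hvS, hdecomp T hvT]
  -- subsets and generic sum comparison
  have hWsub : (insert v T)ᶜ ⊆ (insert v S)ᶜ := by
    intro x hx
    rw [Finset.mem_compl] at *
    intro h
    rcases Finset.mem_insert.mp h with h | h
    · exact hx (h ▸ Finset.mem_insert_self v T)
    · exact hx (Finset.mem_insert_of_mem (hST h))
  have hCsub : Tᶜ ⊆ Sᶜ := by
    intro x hx
    rw [Finset.mem_compl] at *
    exact fun h => hx (hST h)
  have hsum_mono : ∀ {U U' : Finset V}, U' ⊆ U → ∀ (f f' : V → ℝ),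
      (∀ j, 0 ≤ f' j) → (∀ j, f' j ≤ f j) →
      ∑ j ∈ U', f' j ≤ ∑ j ∈ U, f j := by
    intro U U' hUU f f' h0 hle
    calc ∑ j ∈ U', f' j ≤ ∑ j ∈ U', f j := Finset.sum_le_sum fun j _ => hle j
      _ ≤ ∑ j ∈ U, f j :=
        Finset.sum_le_sum_of_subset_of_nonneg hUU
          (fun j _ _ => le_trans (h0 j) (hle j))
  -- (I) compare the `v`-terms
  have hI : F T v ≤ F S v := by
    apply add_le_add
    · exact hsum_mono hCsub _ _
        (fun j => Real.rpow_nonneg (g0 T v j) p)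
        (fun j => Real.rpow_le_rpow (g0 T v j) (gmono hST v j) hp0)
    · exact Real.rpow_le_rpow
        (Finset.sum_nonneg fun j _ => g0 T v j)
        (hsum_mono hCsub _ _ (fun j => g0 T v j) (fun j => gmono hST v j)) hp0
  -- (A) nonnegativity of each bracket
  have hA : ∀ (U : Finset V) (i : V), F (insert v U) i ≤ F U i := by
    intro U i
    apply add_le_add
    · refine hsum_mono ?_ _ _
        (fun j => Real.rpow_nonneg (g0 (insert v U) i j) p)
        (fun j => Real.rpow_le_rpow (g0 (insert v U) i j)
          (gmono (Finset.subset_insert v U) i j) hp0)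
      intro x hx
      rw [Finset.mem_compl] at *
      exact fun h => hx (Finset.mem_insert_of_mem h)
    · refine Real.rpow_le_rpow
        (Finset.sum_nonneg fun j _ => g0 (insert v U) i j)
        (hsum_mono ?_ _ _ (fun j => g0 (insert v U) i j)
          (fun j => gmono (Finset.subset_insert v U) i j)) hp0
      intro x hx
      rw [Finset.mem_compl] at *
      exact fun h => hx (Finset.mem_insert_of_mem h)
  -- rewriting of bracket via the split at v
  have hFdiff : ∀ (U : Finset V), v ∉ U → ∀ i,
      F U i - F (insert v U) i
        = (g U i v) ^ p
          + ∑ j ∈ (insert v U)ᶜ, ((g U i j) ^ p - (g (insert v U) i j) ^ p)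
          + ((g U i v + ∑ j ∈ (insert v U)ᶜ, g U i j) ^ p
             - (∑ j ∈ (insert v U)ᶜ, g (insert v U) i j) ^ p) := by
    intro U hv i
    have h1 : ∑ j ∈ Uᶜ, (g U i j) ^ p
        = (g U i v) ^ p + ∑ j ∈ (insert v U)ᶜ, (g U i j) ^ p :=
      sum_compl_split hv _
    have h2 : ∑ j ∈ Uᶜ, g U i j
        = g U i v + ∑ j ∈ (insert v U)ᶜ, g U i j :=
      sum_compl_split hv _
    simp only [hF]
    rw [h1, h2, Finset.sum_sub_distrib]
    ring
  -- (B) termwise comparison of the brackets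
  have hB : ∀ i, F T i - F (insert v T) i ≤ F S i - F (insert v S) i := by
    intro i
    rw [hFdiff T hvT i, hFdiff S hvS i]
    have piece1 : (g T i v) ^ p ≤ (g S i v) ^ p :=
      Real.rpow_le_rpow (g0 T i v) (gmono hST i v) hp0
    have hterm : ∀ j, (g T i j) ^ p - (g (insert v T) i j) ^ p
        ≤ (g S i j) ^ p - (g (insert v S) i j) ^ p := by
      intro j
      have h := aux_rpow_diff_mono hp (g0 (insert v T) i j)
        (gmono (Finset.insert_subset_insert v hST) i j)
        (by linarith [gmono (Finset.subset_insert v T) i j])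
        (gdiff i j)
      have e1 : g (insert v T) i j + (g T i j - g (insert v T) i j) = g T i j := by
        ring
      have e2 : g (insert v S) i j + (g S i j - g (insert v S) i j) = g S i j := by
        ring
      rw [e1, e2] at h
      exact h
    have htermS0 : ∀ j, 0 ≤ (g S i j) ^ p - (g (insert v S) i j) ^ p := by
      intro j
      have := Real.rpow_le_rpow (g0 (insert v S) i j)
        (gmono (Finset.subset_insert v S) i j) hp0
      linarith
    have htermT0 : ∀ j, 0 ≤ (g T i j) ^ p - (g (insert v T) i j) ^ p := by
      intro j
      have := Real.rpow_le_rpow (g0 (insert v T) i j)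
        (gmono (Finset.subset_insert v T) i j) hp0
      linarith
    have piece2 :
        ∑ j ∈ (insert v T)ᶜ, ((g T i j) ^ p - (g (insert v T) i j) ^ p)
          ≤ ∑ j ∈ (insert v S)ᶜ, ((g S i j) ^ p - (g (insert v S) i j) ^ p) :=
      hsum_mono hWsub _ _ htermT0 hterm
    have piece3 :
        (g T i v + ∑ j ∈ (insert v T)ᶜ, g T i j) ^ p
            - (∑ j ∈ (insert v T)ᶜ, g (insert v T) i j) ^ p
          ≤ (g S i v + ∑ j ∈ (insert v S)ᶜ, g S i j) ^ p
            - (∑ j ∈ (insert v S)ᶜ, g (insert v S) i j) ^ p := by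
      set x' := ∑ j ∈ (insert v T)ᶜ, g (insert v T) i j with hx'
      set x := ∑ j ∈ (insert v S)ᶜ, g (insert v S) i j with hx
      set hT' := g T i v + ∑ j ∈ (insert v T)ᶜ, g T i j with hhT
      set hS' := g S i v + ∑ j ∈ (insert v S)ᶜ, g S i j with hhS
      have hx'0 : 0 ≤ x' := Finset.sum_nonneg fun j _ => g0 (insert v T) i j
      have hxx : x' ≤ x := hsum_mono hWsub _ _
        (fun j => g0 (insert v T) i j)
        (fun j => gmono (Finset.insert_subset_insert v hST) i j)
      have hc'0 : 0 ≤ hT' - x' := by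
        have : x' ≤ ∑ j ∈ (insert v T)ᶜ, g T i j :=
          Finset.sum_le_sum fun j _ => gmono (Finset.subset_insert v T) i j
        have := g0 T i v
        simp only [hhT]
        linarith
      have hcc : hT' - x' ≤ hS' - x := by
        have hd : ∑ j ∈ (insert v T)ᶜ, (g T i j - g (insert v T) i j)
            ≤ ∑ j ∈ (insert v S)ᶜ, (g S i j - g (insert v S) i j) :=
          hsum_mono hWsub _ _
            (fun j => by linarith [gmono (Finset.subset_insert v T) i j])
            (fun j => gdiff i j)
        rw [Finset.sum_sub_distrib, Finset.sum_sub_distrib] at hd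
        have hv' : g T i v ≤ g S i v := gmono hST i v
        simp only [hhT, hhS, hx', hx]
        linarith
      have h := aux_rpow_diff_mono hp hx'0 hxx hc'0 hcc
      have e1 : x' + (hT' - x') = hT' := by ring
      have e2 : x + (hS' - x) = hS' := by ring
      rw [e1, e2] at h
      exact h
    linarith
  -- putting it together
  apply add_le_add hI
  calc ∑ i ∈ (insert v T)ᶜ, (F T i - F (insert v T) i)
      ≤ ∑ i ∈ (insert v T)ᶜ, (F S i - F (insert v S) i) :=
        Finset.sum_le_sum fun i _ => hB i
    _ ≤ ∑ i ∈ (insert v S)ᶜ, (F S i - F (insert v S) i) :=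
        Finset.sum_le_sum_of_subset_of_nonneg hWsub
          (fun i _ _ => by linarith [hA S i])
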